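/- With B_{k,ℓ} := (-1)^k * ∑_{i=0}^{k} C(k,i) * B_{i+ℓ} built from Bernoulli numbers, one has ∑_{k=0}^{n} C(n,k) * B_{k,n-k} = (-1)^n for every n ≥ 0. -/

import Mathlib

/-- Diagonal identity `∑_{k=0}^n C(n,k) B_{k,n-k} = (-1)^n` for
`B_{k,ℓ} := (-1)^k ∑_{i=0}^k C(k,i) B_{i+ℓ}` built from Bernoulli numbers. -/
theorem stmt_3 (n : ℕ) :
    ∑ k ∈ Finset.range (n + 1), (n.choose k : ℚ) *
      ((-1 : ℚ) ^ k * ∑ i ∈ Finset.range (k + 1), (k.choose i : ℚ) * bernoulli (i + (n - k)))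
      = (-1 : ℚ) ^ n := by
  have step1 : ∑ k ∈ Finset.range (n + 1), (n.choose k : ℚ) *
      ((-1 : ℚ) ^ k * ∑ i ∈ Finset.range (k + 1), (k.choose i : ℚ) * bernoulli (i + (n - k)))
      = ∑ p ∈ (Finset.range (n + 1)).sigma (fun k => Finset.range (k + 1)),
        (n.choose p.1 : ℚ) * ((-1 : ℚ) ^ p.1 *
          ((p.1.choose p.2 : ℚ) * bernoulli (p.2 + (n - p.1)))) := by
    rw [Finset.sum_sigma]
    exact Finset.sum_congr rfl fun k hk => by rw [Finset.mul_sum, Finset.mul_sum]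
  rw [step1]
  have step2 : ∑ p ∈ (Finset.range (n + 1)).sigma (fun k => Finset.range (k + 1)),
        (n.choose p.1 : ℚ) * ((-1 : ℚ) ^ p.1 *
          ((p.1.choose p.2 : ℚ) * bernoulli (p.2 + (n - p.1))))
      = ∑ p ∈ (Finset.range (n + 1)).sigma (fun j => Finset.range (j + 1)),
        (-1 : ℚ) ^ (n - p.1) * (-1 : ℚ) ^ p.2 * (n.choose p.1 : ℚ) *
          (p.1.choose p.2 : ℚ) * bernoulli p.1 := by
    refine Finset.sum_nbij' (fun p => ⟨p.2 + (n - p.1), p.2⟩)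
      (fun p => ⟨(n - p.1) + p.2, p.2⟩) ?_ ?_ ?_ ?_ ?_
    · rintro ⟨k, i⟩ hp
      simp only [Finset.mem_sigma, Finset.mem_range] at *
      omega
    · rintro ⟨j, t⟩ hp
      simp only [Finset.mem_sigma, Finset.mem_range] at *
      omega
    · rintro ⟨k, i⟩ hp
      simp only [Finset.mem_sigma, Finset.mem_range] at hp
      simp only [Sigma.mk.inj_iff, heq_eq_eq, and_true]
      omega
    · rintro ⟨j, t⟩ hp
      simp only [Finset.mem_sigma, Finset.mem_range] at hp
      simp only [Sigma.mk.inj_iff, heq_eq_eq, and_true]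
      omega
    · rintro ⟨k, i⟩ hp
      simp only [Finset.mem_sigma, Finset.mem_range] at hp
      obtain ⟨hk, hi⟩ := hp
      have hk' : k ≤ n := by omega
      have hi' : i ≤ k := by omega
      dsimp only
      have hj : i + (n - k) ≤ n := by omega
      have hsub : n - (i + (n - k)) = k - i := by omega
      have hchoose : n.choose k * k.choose i = n.choose (i + (n - k)) * (i + (n - k)).choose i := by
        rw [Nat.choose_mul hi', Nat.choose_mul (Nat.le_add_right i (n - k))]
        congr 1
        have : (i + (n - k)) - i = n - k := by omega
        rw [this]
        have h1 : k - i ≤ n - i := by omega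
        have h2 := Nat.choose_symm h1
        have h3 : n - i - (k - i) = n - k := by omega
        rw [h3] at h2
        exact h2.symm
      have hsign : (-1 : ℚ) ^ (k - i) * (-1 : ℚ) ^ i = (-1 : ℚ) ^ k := by
        rw [← pow_add]; congr 1; omega
      rw [hsub]
      have hc : (n.choose k : ℚ) * (k.choose i : ℚ)
          = (n.choose (i + (n - k)) : ℚ) * ((i + (n - k)).choose i : ℚ) := by
        exact_mod_cast congrArg (Nat.cast : ℕ → ℚ) hchoose
      linear_combination (bernoulli (i + (n - k)) * ((-1 : ℚ) ^ (k - i) * (-1 : ℚ) ^ i)) * hc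
        - ((n.choose k : ℚ) * (k.choose i : ℚ) * bernoulli (i + (n - k))) * hsign
  rw [step2, Finset.sum_sigma]
  have step3 : ∀ j ∈ Finset.range (n + 1),
      ∑ t ∈ Finset.range (j + 1), (-1 : ℚ) ^ (n - j) * (-1 : ℚ) ^ t * (n.choose j : ℚ) *
        (j.choose t : ℚ) * bernoulli j
      = if j = 0 then (-1 : ℚ) ^ n else 0 := by
    intro j hj
    have halt : ∑ t ∈ Finset.range (j + 1), (-1 : ℚ) ^ t * (j.choose t : ℚ)
        = if j = 0 then 1 else 0 := by
      have := @Int.alternating_sum_range_choose j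
      have := congrArg (fun z : ℤ => (z : ℚ)) this
      push_cast at this
      simpa using this
    calc ∑ t ∈ Finset.range (j + 1), (-1 : ℚ) ^ (n - j) * (-1 : ℚ) ^ t * (n.choose j : ℚ) *
        (j.choose t : ℚ) * bernoulli j
        = ((-1 : ℚ) ^ (n - j) * (n.choose j : ℚ) * bernoulli j) *
          ∑ t ∈ Finset.range (j + 1), (-1 : ℚ) ^ t * (j.choose t : ℚ) := by
          rw [Finset.mul_sum]; exact Finset.sum_congr rfl fun t _ => by ring
      _ = if j = 0 then (-1 : ℚ) ^ n else 0 := by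
          rw [halt]
          by_cases h : j = 0
          · simp [h]
          · simp [h]
  rw [Finset.sum_congr rfl step3, Finset.sum_ite_eq' (Finset.range (n + 1)) 0]
  simp
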